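/- Let G = (V,E,o) be a rooted locally finite graph, n ≥ 4, and G_n = (V_n, E_n) the augmented ball graph (edges of G inside V_n plus complete graph on U_n = V_n \ V_{n-2}). If an X^V-valued random element (Y_v)_{v∈V} is a second-order Markov random field with respect to G, then the restriction (Y_v)_{v∈V_n} is a second-order Markov random field with respect to G_n. -/

import Mathlib

open MeasureTheory ProbabilityTheory

section GraphDefs

variable {V : Type*}

/-- The (first) outer boundary of a set of vertices. -/
def graphBdry (G : SimpleGraph V) (A : Set V) : Set V :=
  {u | u ∉ A ∧ ∃ v ∈ A, G.Adj u v}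

/-- The second (double) boundary of a set of vertices. -/
def graphBdry2 (G : SimpleGraph V) (A : Set V) : Set V :=
  graphBdry G A ∪ graphBdry G (A ∪ graphBdry G A)

/-- The square graph: vertices at graph distance 1 or 2 are joined. -/
def sqGraph (G : SimpleGraph V) : SimpleGraph V where
  Adj u v := u ≠ v ∧ G.Reachable u v ∧ G.dist u v ≤ 2
  symm := by
    constructor
    rintro u v ⟨h1, h2, h3⟩
    exact ⟨h1.symm, h2.symm, by rwa [SimpleGraph.dist_comm]⟩
  loopless := by constructor; rintro u ⟨h, -⟩; exact h rfl

/-- A 2-clique: a set of vertices of diameter at most 2. -/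
def TwoClique (G : SimpleGraph V) (K : Set V) : Prop :=
  ∀ u ∈ K, ∀ v ∈ K, u ≠ v → G.Reachable u v ∧ G.dist u v ≤ 2

open scoped Classical in
/-- The finite collection of 2-cliques of a graph on a finite vertex set. -/
noncomputable def cl2Finset (G : SimpleGraph V) [Fintype V] : Finset (Finset V) :=
  Finset.univ.filter fun K => TwoClique G (K : Set V)

end GraphDefs

section MRFDefs

variable {V Ω X : Type*} [MeasurableSpace Ω] [StandardBorelSpace Ω] [Nonempty Ω]
  [MeasurableSpace X]

/-- `Y_A` and `Y_B` are conditionally independent given `Y_S`. -/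
def CondIndepCoords (Y : V → Ω → X) (hY : ∀ v, Measurable (Y v)) (μ : Measure Ω)
    [IsFiniteMeasure μ] (A B S : Set V) : Prop :=
  CondIndepFun
    (MeasurableSpace.comap (fun ω => (fun v : S => Y v ω)) MeasurableSpace.pi)
    ((measurable_pi_iff.mpr fun v : S => hY v).comap_le)
    (fun ω => (fun v : A => Y v ω)) (fun ω => (fun v : B => Y v ω)) μ

/-- First-order Markov random field property on a vertex subset `W`. -/
def IsMRF1On (G : SimpleGraph V) (Y : V → Ω → X) (hY : ∀ v, Measurable (Y v))
    (μ : Measure Ω) [IsFiniteMeasure μ] (W : Set V) : Prop :=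
  ∀ A : Set V, A.Finite → A ⊆ W →
    CondIndepCoords Y hY μ A (W \ (A ∪ graphBdry G A)) (graphBdry G A)

/-- Second-order Markov random field property on a vertex subset `W`. -/
def IsMRF2On (G : SimpleGraph V) (Y : V → Ω → X) (hY : ∀ v, Measurable (Y v))
    (μ : Measure Ω) [IsFiniteMeasure μ] (W : Set V) : Prop :=
  ∀ A : Set V, A.Finite → A ⊆ W →
    CondIndepCoords Y hY μ A (W \ (A ∪ graphBdry2 G A)) (graphBdry2 G A)

end MRFDefs

/-- The ball of radius `n` around the root `o` in `G`. -/
def gball {V : Type*} (G : SimpleGraph V) (o : V) (n : ℕ) : Set V :=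
  {v | G.Reachable o v ∧ G.dist o v ≤ n}

/-- The augmented ball graph `G_n`: the edges of `G` inside the ball `V_n` of radius `n`
about the root, together with all pairs of distinct vertices of the annulus
`U_n = V_n \ V_{n-2}`. -/
def augGraph {V : Type*} (G : SimpleGraph V) (o : V) (n : ℕ) : SimpleGraph V where
  Adj u v := (u ∈ gball G o n ∧ v ∈ gball G o n ∧ G.Adj u v) ∨
    (u ∈ gball G o n \ gball G o (n - 2) ∧ v ∈ gball G o n \ gball G o (n - 2) ∧ u ≠ v)
  symm := by
    constructor
    rintro u v (⟨h1, h2, h3⟩ | ⟨h1, h2, h3⟩)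
    · exact Or.inl ⟨h2, h1, h3.symm⟩
    · exact Or.inr ⟨h2, h1, h3.symm⟩
  loopless := by
    constructor
    rintro u (⟨-, -, h⟩ | ⟨-, -, h⟩)
    · exact G.loopless.irrefl u h
    · exact h rfl



section AuxProb

lemma msle {α : Type*} {m₁ m₂ : MeasurableSpace α} (h : m₁ ≤ m₂) {s : Set α}
    (hs : MeasurableSet[m₁] s) : MeasurableSet[m₂] s := h _ hs

lemma indicator_one_mul {Ω : Type*} (u : Set Ω) (f : Ω → ℝ) :
    f * u.indicator (fun _ => (1:ℝ)) = u.indicator f := by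
  funext ω; by_cases h : ω ∈ u <;> simp [Set.indicator_apply, h]

lemma condexp_sup_of_prod {Ω : Type*} {m' m'' : MeasurableSpace Ω} [mΩ : MeasurableSpace Ω]
    (hm' : m' ≤ mΩ) (hm'' : m'' ≤ mΩ) {μ : Measure Ω} [IsFiniteMeasure μ]
    {s : Set Ω} (hs : MeasurableSet[mΩ] s)
    (hprod : ∀ t, MeasurableSet[m''] t →
      (μ⟦s ∩ t | m'⟧) =ᵐ[μ] (μ⟦s | m'⟧) * (μ⟦t | m'⟧)) :
    (μ⟦s | m' ⊔ m''⟧) =ᵐ[μ] μ⟦s | m'⟧ := by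
  have hsup : m' ⊔ m'' ≤ mΩ := sup_le hm' hm''
  set f : Ω → ℝ := s.indicator (fun _ => 1) with hfdef
  have hfint : Integrable f μ := (integrable_const 1).indicator hs
  set P : Set (Set Ω) := {x | ∃ c t, MeasurableSet[m'] c ∧ MeasurableSet[m''] t ∧ x = c ∩ t}
    with hP
  have hPgen : (m' ⊔ m'' : MeasurableSpace Ω) = MeasurableSpace.generateFrom P := by
    refine le_antisymm (sup_le ?_ ?_) (MeasurableSpace.generateFrom_le ?_)
    · intro c hc
      exact MeasurableSpace.measurableSet_generateFrom
        ⟨c, Set.univ, hc, MeasurableSet.univ, (Set.inter_univ c).symm⟩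
    · intro t ht
      exact MeasurableSpace.measurableSet_generateFrom
        ⟨Set.univ, t, MeasurableSet.univ, ht, (Set.univ_inter t).symm⟩
    · rintro x ⟨c, t, hc, ht, rfl⟩
      exact (msle (le_sup_left : m' ≤ m' ⊔ m'') hc).inter
        (msle (le_sup_right : m'' ≤ m' ⊔ m'') ht)
  have hPpi : IsPiSystem P := by
    rintro x ⟨c₁, t₁, hc₁, ht₁, rfl⟩ y ⟨c₂, t₂, hc₂, ht₂, rfl⟩ -
    exact ⟨c₁ ∩ c₂, t₁ ∩ t₂, hc₁.inter hc₂, ht₁.inter ht₂, Set.inter_inter_inter_comm _ _ _ _⟩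
  have key : ∀ t, MeasurableSet[m' ⊔ m''] t →
      ∫ x in t, (μ⟦s | m'⟧) x ∂μ = ∫ x in t, f x ∂μ := by
    refine MeasurableSpace.induction_on_inter (m := m' ⊔ m'') hPgen hPpi (by simp) ?_ ?_ ?_
    · rintro x ⟨c, t, hc, ht, rfl⟩
      have htΩ : MeasurableSet[mΩ] t := hm'' _ ht
      have hψ : StronglyMeasurable[m'] (μ⟦s | m'⟧) := stronglyMeasurable_condExp
      have hmul_int : Integrable ((μ⟦s | m'⟧) * t.indicator (fun _ => (1:ℝ))) μ := by
        rw [indicator_one_mul]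
        exact integrable_condExp.indicator htΩ
      calc ∫ x in c ∩ t, (μ⟦s | m'⟧) x ∂μ
          = ∫ x in c, t.indicator (μ⟦s | m'⟧) x ∂μ := (setIntegral_indicator htΩ).symm
        _ = ∫ x in c, ((μ⟦s | m'⟧) * t.indicator (fun _ => (1:ℝ))) x ∂μ := by
            rw [indicator_one_mul]
        _ = ∫ x in c, (μ[(μ⟦s | m'⟧) * t.indicator (fun _ => (1:ℝ)) | m']) x ∂μ :=
            (setIntegral_condExp hm' hmul_int hc).symm
        _ = ∫ x in c, ((μ⟦s | m'⟧) * (μ⟦t | m'⟧)) x ∂μ := by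
            refine integral_congr_ae (ae_restrict_of_ae ?_)
            exact condExp_mul_of_stronglyMeasurable_left hψ hmul_int
              ((integrable_const 1).indicator htΩ)
        _ = ∫ x in c, (μ⟦s ∩ t | m'⟧) x ∂μ := by
            refine integral_congr_ae (ae_restrict_of_ae ?_)
            exact (hprod t ht).symm
        _ = ∫ x in c, (s ∩ t).indicator (fun _ => (1:ℝ)) x ∂μ :=
            setIntegral_condExp hm' ((integrable_const 1).indicator (hs.inter htΩ)) hc
        _ = ∫ x in c, t.indicator f x ∂μ := by
            rw [hfdef, Set.indicator_indicator, Set.inter_comm t s]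
        _ = ∫ x in c ∩ t, f x ∂μ := setIntegral_indicator htΩ
    · intro t ht hC
      have htΩ : MeasurableSet[mΩ] t := hsup _ ht
      have e1 := integral_add_compl htΩ (integrable_condExp (f := f) (m := m') (μ := μ))
      have e2 := integral_add_compl htΩ hfint
      have e3 : ∫ x, (μ⟦s | m'⟧) x ∂μ = ∫ x, f x ∂μ := integral_condExp hm'
      linarith
    · intro g hdisj hmeas hC
      rw [integral_iUnion (fun i => hsup _ (hmeas i)) hdisj integrable_condExp.integrableOn,
        integral_iUnion (fun i => hsup _ (hmeas i)) hdisj hfint.integrableOn]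
      exact tsum_congr hC
  exact (ae_eq_condExp_of_forall_setIntegral_eq hsup hfint
    (fun t _ _ => integrable_condExp.integrableOn) (fun t ht _ => key t ht)
    (StronglyMeasurable.aestronglyMeasurable (stronglyMeasurable_condExp.mono (le_sup_left : m' ≤ m' ⊔ m'')))).symm

lemma condIndep_sup {Ω : Type*} {m' m₁ m₂ m₃ : MeasurableSpace Ω} [mΩ : MeasurableSpace Ω]
    [StandardBorelSpace Ω] [Nonempty Ω]
    (hm' : m' ≤ mΩ) (h1 : m₁ ≤ mΩ) (h2 : m₂ ≤ mΩ) (h3 : m₃ ≤ mΩ)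
    {μ : Measure Ω} [IsFiniteMeasure μ] (h : CondIndep m' m₁ (m₂ ⊔ m₃) hm' μ) :
    CondIndep (m' ⊔ m₃) m₁ m₂ (sup_le hm' h3) μ := by
  rw [condIndep_iff _ _ _ _ h1 (sup_le h2 h3)] at h
  rw [condIndep_iff _ _ _ _ h1 h2]
  intro s u hs hu
  have hm₂' : (m' ⊔ m₃ : MeasurableSpace Ω) ≤ mΩ := sup_le hm' h3
  have hbig : (m' ⊔ (m₂ ⊔ m₃) : MeasurableSpace Ω) ≤ mΩ := sup_le hm' (sup_le h2 h3)
  have hm'big : m' ≤ m' ⊔ (m₂ ⊔ m₃) := le_sup_left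
  have hm₂'big : (m' ⊔ m₃ : MeasurableSpace Ω) ≤ m' ⊔ (m₂ ⊔ m₃) :=
    sup_le le_sup_left (le_sup_of_le_right le_sup_right)
  have hsΩ : MeasurableSet[mΩ] s := h1 _ hs
  have huΩ : MeasurableSet[mΩ] u := h2 _ hu
  -- Step A
  have hA : (μ⟦s | m' ⊔ (m₂ ⊔ m₃)⟧) =ᵐ[μ] μ⟦s | m'⟧ :=
    condexp_sup_of_prod hm' (sup_le h2 h3) hsΩ (fun t ht => h s t hs ht)
  -- Step A'
  have hA' : (μ⟦s | m' ⊔ m₃⟧) =ᵐ[μ] μ⟦s | m'⟧ := by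
    calc (μ⟦s | m' ⊔ m₃⟧)
        =ᵐ[μ] μ[(μ⟦s | m' ⊔ (m₂ ⊔ m₃)⟧) | m' ⊔ m₃] :=
          (condExp_condExp_of_le hm₂'big hbig).symm
      _ =ᵐ[μ] μ[(μ⟦s | m'⟧) | m' ⊔ m₃] := condExp_congr_ae hA
      _ =ᵐ[μ] μ⟦s | m'⟧ := by
          rw [condExp_of_stronglyMeasurable hm₂'
            (stronglyMeasurable_condExp.mono (le_sup_left : m' ≤ m' ⊔ m₃)) integrable_condExp]
  -- Step B
  have h_ind : (s ∩ u).indicator (fun _ => (1:ℝ))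
      = u.indicator (fun _ => (1:ℝ)) * s.indicator (fun _ => (1:ℝ)) := by
    funext ω
    by_cases h1 : ω ∈ s <;> by_cases h2 : ω ∈ u <;>
      simp [Set.indicator_apply, Set.mem_inter_iff, h1, h2]
  have hubig : MeasurableSet[m' ⊔ (m₂ ⊔ m₃)] u :=
    msle (le_sup_of_le_right (le_sup_left : m₂ ≤ m₂ ⊔ m₃)) hu
  have hum₂' : (μ⟦u | m' ⊔ m₃⟧) = (μ⟦u | m' ⊔ m₃⟧) := rfl
  have hint_su : Integrable ((s ∩ u).indicator (fun _ => (1:ℝ))) μ :=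
    (integrable_const 1).indicator (hsΩ.inter huΩ)
  have hint_mul : Integrable (u.indicator (fun _ => (1:ℝ)) * s.indicator (fun _ => (1:ℝ))) μ := by
    rw [← h_ind]; exact hint_su
  have hBig : (μ⟦s ∩ u | m' ⊔ (m₂ ⊔ m₃)⟧)
      =ᵐ[μ] u.indicator (fun _ => (1:ℝ)) * (μ⟦s | m'⟧) := by
    calc (μ⟦s ∩ u | m' ⊔ (m₂ ⊔ m₃)⟧)
        = μ[u.indicator (fun _ => (1:ℝ)) * s.indicator (fun _ => (1:ℝ)) | m' ⊔ (m₂ ⊔ m₃)] := by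
          rw [h_ind]
      _ =ᵐ[μ] u.indicator (fun _ => (1:ℝ)) * (μ⟦s | m' ⊔ (m₂ ⊔ m₃)⟧) :=
          condExp_mul_of_stronglyMeasurable_left (stronglyMeasurable_const.indicator hubig)
            hint_mul ((integrable_const 1).indicator hsΩ)
      _ =ᵐ[μ] u.indicator (fun _ => (1:ℝ)) * (μ⟦s | m'⟧) := by
          filter_upwards [hA] with ω hω
          simp only [Pi.mul_apply, hω]
  have hint2 : Integrable ((μ⟦s | m'⟧) * u.indicator (fun _ => (1:ℝ))) μ := by
    rw [indicator_one_mul]; exact integrable_condExp.indicator huΩ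
  calc (μ⟦s ∩ u | m' ⊔ m₃⟧)
      =ᵐ[μ] μ[(μ⟦s ∩ u | m' ⊔ (m₂ ⊔ m₃)⟧) | m' ⊔ m₃] :=
        (condExp_condExp_of_le hm₂'big hbig).symm
    _ =ᵐ[μ] μ[u.indicator (fun _ => (1:ℝ)) * (μ⟦s | m'⟧) | m' ⊔ m₃] := condExp_congr_ae hBig
    _ = μ[(μ⟦s | m'⟧) * u.indicator (fun _ => (1:ℝ)) | m' ⊔ m₃] := by rw [mul_comm]
    _ =ᵐ[μ] (μ⟦s | m'⟧) * (μ⟦u | m' ⊔ m₃⟧) :=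
        condExp_mul_of_stronglyMeasurable_left
          (stronglyMeasurable_condExp.mono (le_sup_left : m' ≤ m' ⊔ m₃)) hint2
          ((integrable_const 1).indicator huΩ)
    _ =ᵐ[μ] (μ⟦s | m' ⊔ m₃⟧) * (μ⟦u | m' ⊔ m₃⟧) := by
        filter_upwards [hA'] with ω hω
        simp only [Pi.mul_apply, hω]


section Machinery

lemma comap_prodMk {Ω γ δ : Type*} (mγ : MeasurableSpace γ) (mδ : MeasurableSpace δ)
    (g : Ω → γ) (h : Ω → δ) :
    MeasurableSpace.comap (fun ω => (g ω, h ω)) Prod.instMeasurableSpace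
      = mγ.comap g ⊔ mδ.comap h := by
  show MeasurableSpace.comap _ (mγ.comap Prod.fst ⊔ mδ.comap Prod.snd) = _
  rw [MeasurableSpace.comap_sup, MeasurableSpace.comap_comp, MeasurableSpace.comap_comp]
  rfl

lemma condIndepFun_congr_cond {Ω β γ : Type*} {m₁ m₂ : MeasurableSpace Ω}
    [mΩ : MeasurableSpace Ω] [StandardBorelSpace Ω] {mβ : MeasurableSpace β}
    {mγ : MeasurableSpace γ} {μ : Measure Ω} [IsFiniteMeasure μ]
    {f : Ω → β} {g : Ω → γ} (hm : m₁ = m₂) {h₁ : m₁ ≤ mΩ} {h₂ : m₂ ≤ mΩ}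
    (h : CondIndepFun m₁ h₁ f g μ) : CondIndepFun m₂ h₂ f g μ := by
  subst hm; exact h

lemma condIndepFun_enlarge {Ω β γ δ : Type*} {m' : MeasurableSpace Ω}
    [mΩ : MeasurableSpace Ω] [StandardBorelSpace Ω] [Nonempty Ω]
    {mβ : MeasurableSpace β} {mγ : MeasurableSpace γ} {mδ : MeasurableSpace δ}
    {hm' : m' ≤ mΩ} {μ : Measure Ω} [IsFiniteMeasure μ]
    {f : Ω → β} {g : Ω → γ} {h : Ω → δ} (hf : Measurable f) (hg : Measurable g)
    (hh : Measurable h)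
    (hi : CondIndepFun m' hm' f (fun ω => (g ω, h ω)) μ) :
    CondIndepFun (m' ⊔ mδ.comap h) (sup_le hm' hh.comap_le) f g μ := by
  rw [condIndepFun_iff_condIndep] at hi ⊢
  rw [comap_prodMk mγ mδ g h] at hi
  exact condIndep_sup hm' hf.comap_le hg.comap_le hh.comap_le hi

lemma comap_coords_eq {V Ω X : Type*} [MeasurableSpace Ω] [mX : MeasurableSpace X]
    (Y : V → Ω → X) (S : Set V) :
    MeasurableSpace.comap (fun ω => (fun v : S => Y v ω)) MeasurableSpace.pi
      = ⨆ v ∈ S, mX.comap (Y v) := by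
  rw [MeasurableSpace.pi, MeasurableSpace.comap_iSup]
  simp_rw [MeasurableSpace.comap_comp]
  rw [iSup_subtype]
  rfl

lemma comap_coords_union {V Ω X : Type*} [MeasurableSpace Ω] [mX : MeasurableSpace X]
    (Y : V → Ω → X) (D T : Set V) :
    MeasurableSpace.comap (fun ω => (fun v : ↥(D ∪ T) => Y v ω)) MeasurableSpace.pi
      = MeasurableSpace.comap (fun ω => (fun v : D => Y v ω)) MeasurableSpace.pi
        ⊔ MeasurableSpace.comap (fun ω => (fun v : T => Y v ω)) MeasurableSpace.pi := by
  rw [comap_coords_eq, comap_coords_eq, comap_coords_eq, iSup_union]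

lemma CondIndepCoords.symm {V Ω X : Type*} [MeasurableSpace Ω] [StandardBorelSpace Ω]
    [Nonempty Ω] [MeasurableSpace X] {Y : V → Ω → X} {hY : ∀ v, Measurable (Y v)}
    {μ : Measure Ω} [IsFiniteMeasure μ] {A B S : Set V}
    (h : CondIndepCoords Y hY μ A B S) : CondIndepCoords Y hY μ B A S :=
  Kernel.IndepFun.symm h

lemma condIndepCoords_of_subsets {V Ω X : Type*} [MeasurableSpace Ω] [StandardBorelSpace Ω]
    [Nonempty Ω] [MeasurableSpace X] {Y : V → Ω → X} {hY : ∀ v, Measurable (Y v)}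
    {μ : Measure Ω} [IsFiniteMeasure μ] {A C D B S : Set V}
    (h : CondIndepCoords Y hY μ A C D) (hBC : B ⊆ C) (hTC : S \ D ⊆ C) (hDS : D ⊆ S) :
    CondIndepCoords Y hY μ A B S := by
  set T : Set V := S \ D with hT
  have hmeas : ∀ W : Set V, Measurable (fun ω => (fun v : W => Y v ω)) :=
    fun W => measurable_pi_iff.mpr fun v => hY v
  unfold CondIndepCoords at h ⊢
  have hφ : Measurable (fun x : (∀ v : C, X) =>
      ((fun v : B => x ⟨v.1, hBC v.2⟩), (fun v : T => x ⟨v.1, hTC v.2⟩))) := by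
    refine Measurable.prod ?_ ?_ <;>
      exact measurable_pi_iff.mpr fun v => measurable_pi_apply _
  have hproj : CondIndepFun _ ((hmeas D).comap_le) (fun ω => (fun v : A => Y v ω))
      (fun ω => ((fun v : B => Y v ω), (fun v : T => Y v ω))) μ :=
    h.comp measurable_id hφ
  have h2 := condIndepFun_enlarge (hmeas A) (hmeas B) (hmeas T) hproj
  have hDT : D ∪ T = S := Set.union_diff_cancel hDS
  refine condIndepFun_congr_cond ?_ h2
  rw [← comap_coords_union Y D T, hDT]
end Machinery

end AuxProb

section AuxGraph

lemma walkball_finite {V : Type*} (G : SimpleGraph V) [G.LocallyFinite] :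
    ∀ (k : ℕ) (x : V), {v | ∃ p : G.Walk x v, p.length ≤ k}.Finite := by
  intro k
  induction k with
  | zero =>
    intro x
    refine (Set.finite_singleton x).subset ?_
    rintro v ⟨p, hp⟩
    exact (SimpleGraph.Walk.eq_of_length_eq_zero (Nat.le_zero.mp hp)).symm ▸ rfl
  | succ k ih =>
    intro x
    refine Set.Finite.subset (Set.Finite.union (Set.finite_singleton x)
      ((G.neighborSet x).toFinite.biUnion (fun u _ => ih u))) ?_
    rintro v ⟨p, hp⟩
    cases p with
    | nil => exact Or.inl rfl
    | cons h q =>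
      refine Or.inr (Set.mem_biUnion h ⟨q, ?_⟩)
      simp only [SimpleGraph.Walk.length_cons] at hp
      omega

lemma gball_finite {V : Type*} (G : SimpleGraph V) [G.LocallyFinite] (o : V) (n : ℕ) :
    (gball G o n).Finite := by
  refine (walkball_finite G n o).subset ?_
  rintro v ⟨hr, hd⟩
  obtain ⟨p, hp⟩ := hr.exists_walk_length_eq_dist
  exact ⟨p, by rw [hp]; exact hd⟩

lemma gball_mono {V : Type*} {G : SimpleGraph V} {o : V} {m n : ℕ} (h : m ≤ n) :
    gball G o m ⊆ gball G o n := fun v hv => ⟨hv.1, hv.2.trans h⟩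

lemma adj_gball {V : Type*} {G : SimpleGraph V} {o : V} {m : ℕ} {u v : V}
    (hu : u ∈ gball G o m) (h : G.Adj u v) : v ∈ gball G o (m + 1) := by
  obtain ⟨p, hp⟩ := hu.1.exists_walk_length_eq_dist
  refine ⟨(p.concat h).reachable, ?_⟩
  calc G.dist o v ≤ (p.concat h).length := SimpleGraph.dist_le _
    _ = p.length + 1 := SimpleGraph.Walk.length_concat _ _
    _ = G.dist o u + 1 := by rw [hp]
    _ ≤ m + 1 := by have := hu.2; omega

end AuxGraph

/-- If `(Y_v)_{v ∈ V}` is a second-order Markov random field with respect to `G`, then the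
restriction `(Y_v)_{v ∈ V_n}` is a second-order Markov random field with respect to the
augmented ball graph `G_n`. -/
theorem isMRF2_restrict_augGraph {V Ω X : Type*} [MeasurableSpace Ω] [StandardBorelSpace Ω]
    [Nonempty Ω] [MeasurableSpace X] (G : SimpleGraph V) [G.LocallyFinite] (o : V)
    (n : ℕ) (hn : 4 ≤ n) (Y : V → Ω → X) (hY : ∀ v, Measurable (Y v))
    (μ : Measure Ω) [IsProbabilityMeasure μ]
    (hMRF : IsMRF2On G Y hY μ Set.univ) :
    IsMRF2On (augGraph G o n) Y hY μ (gball G o n) := by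
  classical
  intro A hAfin hAsub
  set Gn := augGraph G o n with hGndef
  set S := graphBdry2 Gn A with hSdef
  set B := gball G o n \ (A ∪ S) with hBdef
  have h1n : n - 2 + 1 ≤ n := by omega
  have h2n : n - 2 + 1 + 1 ≤ n := by omega
  have hGadj : ∀ {u v : V}, u ∈ gball G o n → v ∈ gball G o n → G.Adj u v → Gn.Adj u v :=
    fun hu hv h => Or.inl ⟨hu, hv, h⟩
  have hSA : ∀ u ∈ S, u ∉ A := by
    rintro u (⟨h, -⟩ | ⟨h, -⟩) hA
    · exact h hA
    · exact h (Or.inl hA)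
  have hBA : ∀ u ∈ B, u ∉ A := fun u hu hA => hu.2 (Or.inl hA)
  have hBS : ∀ u ∈ B, u ∉ S := fun u hu hS => hu.2 (Or.inr hS)
  have hmemAS : ∀ u ∈ gball G o n, u ∉ B → u ∈ A ∪ S := by
    intro u hun huB
    by_contra h
    exact huB ⟨hun, h⟩
  by_cases hcase : ∀ a ∈ A, a ∈ gball G o (n - 2)
  · -- Case 1 : A ⊆ V_{n-2}
    have hD1ball : graphBdry G A ⊆ gball G o (n - 2 + 1) := by
      rintro u ⟨-, v, hvA, huv⟩
      exact adj_gball (hcase v hvA) huv.symm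
    have L1a : graphBdry G A ⊆ graphBdry Gn A := by
      rintro u ⟨huA, v, hvA, huv⟩
      refine ⟨huA, v, hvA, hGadj (gball_mono h1n (hD1ball ⟨huA, v, hvA, huv⟩)) ?_ huv⟩
      exact gball_mono (by omega) (hcase v hvA)
    have L1b : graphBdry G (A ∪ graphBdry G A) ⊆ S := by
      rintro u ⟨huAD, w, hw, huw⟩
      have hwball : w ∈ gball G o (n - 2 + 1) := by
        rcases hw with hw | hw
        · exact gball_mono (by omega) (hcase w hw)
        · exact hD1ball hw
      have huVn : u ∈ gball G o n := gball_mono h2n (adj_gball hwball huw.symm)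
      by_cases hu1 : u ∈ graphBdry Gn A
      · exact Or.inl hu1
      · refine Or.inr ⟨?_, w, ?_, hGadj huVn (gball_mono h1n hwball) huw⟩
        · rintro (h | h)
          · exact huAD (Or.inl h)
          · exact hu1 h
        · rcases hw with hw | hw
          · exact Or.inl hw
          · exact Or.inr (L1a hw)
    have hDS : graphBdry2 G A ⊆ S := by
      rintro u (hu | hu)
      · exact Or.inl (L1a hu)
      · exact L1b hu
    have h0 := hMRF A hAfin (Set.subset_univ A)
    refine condIndepCoords_of_subsets h0 ?_ ?_ hDS
    · rintro u hu
      refine ⟨Set.mem_univ u, ?_⟩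
      rintro (h | h)
      · exact hBA u hu h
      · exact hBS u hu (hDS h)
    · rintro u ⟨huS, huD⟩
      exact ⟨Set.mem_univ u, fun h => h.elim (hSA u huS) huD⟩
  · -- Case 2 : A meets the annulus
    push_neg at hcase
    obtain ⟨a, haA, haU⟩ := hcase
    have haVn : a ∈ gball G o n := hAsub haA
    have hU : ∀ u, u ∈ gball G o n → u ∉ gball G o (n - 2) → u ∈ A ∪ S := by
      intro u hun hun2
      by_cases huA : u ∈ A
      · exact Or.inl huA
      refine Or.inr (Or.inl ⟨huA, a, haA, Or.inr ⟨⟨hun, hun2⟩, ⟨haVn, haU⟩, ?_⟩⟩)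
      rintro rfl
      exact huA haA
    have hBV2 : B ⊆ gball G o (n - 2) := by
      intro b hb
      by_contra h
      rcases hU b hb.1 h with h' | h'
      · exact hBA b hb h'
      · exact hBS b hb h'
    have hBfin : B.Finite := (gball_finite G o n).subset Set.diff_subset
    have hbdVn : ∀ w ∈ graphBdry Gn A, w ∈ gball G o n := by
      rintro w ⟨-, v, -, (⟨h, -, -⟩ | ⟨⟨h, -⟩, -, -⟩)⟩ <;> exact h
    have hadjAB : ∀ v w, v ∈ A → w ∈ B → ¬G.Adj v w := by
      intro v w hv hw hadj
      exact hBS w hw (Or.inl ⟨hBA w hw, v, hv,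
        hGadj (hw.1) (hAsub hv) hadj.symm⟩)
    have hadj2 : ∀ w b, w ∈ graphBdry Gn A → b ∈ B → ¬G.Adj w b := by
      intro w b hwS hb hadj
      refine hBS b hb (Or.inr ⟨?_, w, Or.inr hwS, hGadj (gball_mono (by omega) (hBV2 hb))
        (hbdVn w hwS) hadj.symm⟩)
      rintro (h | h)
      · exact hBA b hb h
      · exact hBS b hb (Or.inl h)
    have C1 : ∀ u ∈ graphBdry G B, u ∈ S ∧ u ∉ A := by
      rintro u ⟨huB, b, hbB, hub⟩
      have huVn : u ∈ gball G o n := gball_mono h1n (adj_gball (hBV2 hbB) hub.symm)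
      have huA : u ∉ A := fun h => hadjAB u b h hbB hub
      rcases hmemAS u huVn huB with h | h
      · exact absurd h huA
      · exact ⟨h, huA⟩
    have C2 : ∀ u ∈ graphBdry G (B ∪ graphBdry G B), u ∈ S ∧ u ∉ A := by
      rintro u ⟨huBD, w, hw, huw⟩
      have hwball : w ∈ gball G o (n - 2 + 1) := by
        rcases hw with hw | hw
        · exact gball_mono (by omega) (hBV2 hw)
        · rcases hw with ⟨-, b, hbB, hwb⟩
          exact adj_gball (hBV2 hbB) hwb.symm
      have huVn : u ∈ gball G o n := gball_mono h2n (adj_gball hwball huw.symm)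
      have huA : u ∉ A := by
        intro huA'
        rcases hw with hw | hw
        · exact hadjAB u w huA' hw huw
        · obtain ⟨hwB, b, hbB, hwb⟩ := hw
          have hwA : w ∉ A := (C1 w ⟨hwB, b, hbB, hwb⟩).2
          have hwS : w ∈ graphBdry Gn A :=
            ⟨hwA, u, huA', hGadj (gball_mono h1n hwball) huVn huw.symm⟩
          exact hadj2 w b hwS hbB hwb
      have huB : u ∉ B := fun h => huBD (Or.inl h)
      rcases hmemAS u huVn huB with h | h
      · exact absurd h huA
      · exact ⟨h, huA⟩
    have hD2S : graphBdry2 G B ⊆ S := by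
      rintro u (hu | hu)
      · exact (C1 u hu).1
      · exact (C2 u hu).1
    have h0 := hMRF B hBfin (Set.subset_univ B)
    refine CondIndepCoords.symm (condIndepCoords_of_subsets h0 ?_ ?_ hD2S)
    · intro u hu
      refine ⟨Set.mem_univ u, ?_⟩
      rintro (h | h)
      · exact hBA u h hu
      · rcases h with h | h
        · exact (C1 u h).2 hu
        · exact (C2 u h).2 hu
    · rintro u ⟨huS, huD⟩
      exact ⟨Set.mem_univ u, fun h => h.elim (fun h' => hBS u h' huS) huD⟩
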